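/- arXiv:2206.07855 — 2 statements merged into one kernel-verified Lean document; each statement's English description precedes it below -/
import Mathlib

section
/- Let δ > 0, and consider the recurrence x_{t+1} = δx_{t−2} + α − σx_{t−1} + x_t². If κ = ½(|σ| + δ + 1 + √((|σ| + δ + 1)² + 4|α|)) and |x_t| > κ with |x_t| ≥ max(|x_{t−1}|, |x_{t−2}|), then x_{t+1} > |x_t| > κ, and consequently the forward sequence (x_{t+k})_{k≥0} is strictly increasing and unbounded. -/
theorem henon3d_escape_forward (α σ δ : ℝ) (hδ : 0 < δ)
    (x : ℤ → ℝ)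
    (hrec : ∀ t : ℤ, x (t + 1) = δ * x (t - 2) + α - σ * x (t - 1) + (x t) ^ 2)
    (κ : ℝ)
    (hκ : κ = (|σ| + δ + 1 + Real.sqrt ((|σ| + δ + 1) ^ 2 + 4 * |α|)) / 2)
    (t : ℤ)
    (hbig : κ < |x t|)
    (hmax : max |x (t - 1)| |x (t - 2)| ≤ |x t|) :
    x (t + 1) > |x t| ∧
    StrictMono (fun k : ℕ => x (t + k)) ∧
    ¬ BddAbove (Set.range fun k : ℕ => x (t + k)) := by
  have hσ : (0:ℝ) ≤ |σ| := abs_nonneg σ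
  have hc : (0:ℝ) ≤ |α| := abs_nonneg α
  set b : ℝ := |σ| + δ + 1 with hb
  have hb0 : 0 < b := by simp only [hb]; linarith
  set s : ℝ := Real.sqrt (b ^ 2 + 4 * |α|) with hsdef
  have hs0 : 0 ≤ s := Real.sqrt_nonneg _
  have hs2 : s ^ 2 = b ^ 2 + 4 * |α| := Real.sq_sqrt (by positivity)
  have hsb : b ≤ s := by nlinarith
  have hκb : b ≤ κ := by rw [hκ]; linarith
  have hκ0 : 0 < κ := lt_of_lt_of_le hb0 hκb
  -- quadratic positivity above κ
  have hpos : ∀ y : ℝ, κ < y → 0 < y ^ 2 - b * y - |α| := by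
    intro y hy
    have h2 : s < 2 * y - b := by rw [hκ] at hy; linarith
    nlinarith
  set ε : ℝ := |x t| ^ 2 - b * |x t| - |α| with hεdef
  have hε : 0 < ε := hpos _ hbig
  have hmono : ∀ y : ℝ, |x t| ≤ y → ε ≤ y ^ 2 - b * y - |α| := by
    intro y hy
    have h1 : 0 ≤ (y - |x t|) * (y + |x t| - b) :=
      mul_nonneg (by linarith) (by linarith [abs_nonneg (x t)])
    nlinarith
  have hstep : ∀ u : ℤ, |x t| ≤ |x u| → |x (u - 1)| ≤ |x u| → |x (u - 2)| ≤ |x u| →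
      |x u| + ε ≤ x (u + 1) := by
    intro u h0 h1 h2
    have hr := hrec u
    have ha : -(δ * |x u|) ≤ δ * x (u - 2) := by
      nlinarith [neg_abs_le (x (u - 2)), abs_nonneg (x (u - 2))]
    have hb' : -(|σ| * |x u|) ≤ -(σ * x (u - 1)) := by
      have h3 : σ * x (u - 1) ≤ |σ * x (u - 1)| := le_abs_self _
      rw [abs_mul] at h3
      have h4 : |σ| * |x (u - 1)| ≤ |σ| * |x u| := mul_le_mul_of_nonneg_left h1 hσ
      linarith
    have hsq : (x u) ^ 2 = |x u| ^ 2 := (sq_abs _).symm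
    have hα : -|α| ≤ α := neg_abs_le α
    have hq := hmono (|x u|) h0
    rw [hb] at hq
    rw [hr]
    nlinarith [ha, hb', hα, hq, hsq]
  -- main induction
  have key : ∀ k : ℕ, |x t| ≤ |x (t + k)| ∧ |x (t + k - 1)| ≤ |x (t + k)| ∧
      |x (t + k - 2)| ≤ |x (t + k)| ∧ |x (t + k)| + ε ≤ x (t + k + 1) := by
    intro k
    induction k with
    | zero =>
      simp only [Nat.cast_zero, add_zero]
      exact ⟨le_refl _, le_trans (le_max_left _ _) hmax, le_trans (le_max_right _ _) hmax,
        hstep t (le_refl _) (le_trans (le_max_left _ _) hmax) (le_trans (le_max_right _ _) hmax)⟩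
    | succ k ih =>
      obtain ⟨h0, h1, h2, h3⟩ := ih
      have hcast : (t + ((k : ℕ) + 1 : ℕ) : ℤ) = t + (k : ℤ) + 1 := by push_cast; ring
      rw [hcast]
      have e1 : t + (k : ℤ) + 1 - 1 = t + (k : ℤ) := by ring
      have e2 : t + (k : ℤ) + 1 - 2 = t + (k : ℤ) - 1 := by ring
      rw [e1, e2]
      have hxt0 : 0 < |x t| := lt_trans hκ0 hbig
      have habs : |x (t + (k : ℤ) + 1)| = x (t + (k : ℤ) + 1) := by
        apply abs_of_pos; linarith
      refine ⟨?_, ?_, ?_, ?_⟩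
      · rw [habs]; linarith
      · rw [habs]; linarith
      · rw [habs]; linarith
      · exact hstep _ (by rw [habs]; linarith) (by rw [e1, habs]; linarith)
          (by rw [e2, habs]; linarith)
  have hxt0 : 0 < |x t| := lt_trans hκ0 hbig
  refine ⟨?_, ?_, ?_⟩
  · have h := (key 0).2.2.2
    simp only [Nat.cast_zero, add_zero] at h
    linarith
  · apply strictMono_nat_of_lt_succ
    intro k
    have h := (key k).2.2.2
    show x (t + (k : ℤ)) < x (t + ((k + 1 : ℕ) : ℤ))
    have hcast : (t + ((k : ℕ) + 1 : ℕ) : ℤ) = t + (k : ℤ) + 1 := by push_cast; ring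
    rw [hcast]
    have := le_abs_self (x (t + (k : ℤ)))
    linarith
  · rintro ⟨M, hM⟩
    have grow : ∀ k : ℕ, |x t| + k * ε ≤ x (t + k + 1) := by
      intro k
      induction k with
      | zero =>
        have h := (key 0).2.2.2
        simp only [Nat.cast_zero, add_zero] at h ⊢
        linarith
      | succ k ih =>
        have h := (key (k + 1)).2.2.2
        have hcast : (t + ((k : ℕ) + 1 : ℕ) : ℤ) = t + (k : ℤ) + 1 := by push_cast; ring
        rw [hcast] at h
        have hle := le_abs_self (x (t + (k : ℤ) + 1))
        have hcast2 : (t + ((k : ℕ) + 1 : ℕ) : ℤ) + 1 = t + (k : ℤ) + 1 + 1 := by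
          push_cast; ring
        rw [hcast2]
        have hmul : (((k : ℕ) + 1 : ℕ) : ℝ) * ε = (k : ℝ) * ε + ε := by push_cast; ring
        rw [hmul]
        linarith
    obtain ⟨k, hk⟩ := exists_nat_gt ((M - |x t|) / ε)
    have hmem : x (t + ((k + 1 : ℕ) : ℤ)) ≤ M := hM ⟨k + 1, rfl⟩
    have hcast : (t + ((k : ℕ) + 1 : ℕ) : ℤ) = t + (k : ℤ) + 1 := by push_cast; ring
    rw [hcast] at hmem
    have h2 : M - |x t| < k * ε := (div_lt_iff₀ hε).mp hk
    have := grow k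
    linarith
end

section
/- Every bounded orbit of the map L(x,y,z) = (δz + α − σy + x², x, y) with δ > 0 is contained in the cube {(x,y,z) : |x| ≤ κ, |y| ≤ κ, |z| ≤ κ}, where κ = ½(|σ| + δ + 1 + √((|σ| + δ + 1)² + 4|α|)). -/
theorem henon3d_bounded_orbits_in_cube (α σ δ : ℝ) (hδ : 0 < δ)
    (ξ : ℤ → ℝ × ℝ × ℝ)
    (horbit : ∀ t : ℤ,
      ξ (t + 1) = (δ * (ξ t).2.2 + α - σ * (ξ t).2.1 + (ξ t).1 ^ 2,
                   (ξ t).1, (ξ t).2.1))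
    (hbdd : ∃ M : ℝ, ∀ t : ℤ, ‖ξ t‖ ≤ M)
    (κ : ℝ)
    (hκ : κ = (|σ| + δ + 1 + Real.sqrt ((|σ| + δ + 1) ^ 2 + 4 * |α|)) / 2) :
    ∀ t : ℤ, |(ξ t).1| ≤ κ ∧ |(ξ t).2.1| ≤ κ ∧ |(ξ t).2.2| ≤ κ := by
  obtain ⟨M, hM⟩ := hbdd
  set f : ℤ → ℝ := fun t => |(ξ t).1| with hf
  have hfle : ∀ t, f t ≤ M := fun t => by
    have h1 : ‖(ξ t).1‖ ≤ ‖ξ t‖ := norm_fst_le _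
    simpa [hf, Real.norm_eq_abs] using h1.trans (hM t)
  have hbdd' : BddAbove (Set.range f) := ⟨M, by rintro x ⟨t, rfl⟩; exact hfle t⟩
  set S := sSup (Set.range f) with hS
  have hfleS : ∀ t, f t ≤ S := fun t => le_csSup hbdd' ⟨t, rfl⟩
  have hS0 : 0 ≤ S := le_trans (abs_nonneg _) (hfleS 0)
  have hy : ∀ t : ℤ, (ξ t).2.1 = (ξ (t - 1)).1 := fun t => by
    have h := horbit (t - 1)
    rw [show t - 1 + 1 = t by ring] at h
    rw [h]
  have hz : ∀ t : ℤ, (ξ t).2.2 = (ξ (t - 2)).1 := fun t => by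
    have h := horbit (t - 1)
    rw [show t - 1 + 1 = t by ring] at h
    have h2 := hy (t - 1)
    rw [h]
    simpa [show t - 1 - 1 = t - 2 by ring] using h2
  set b := |σ| + δ + 1 with hb
  have hb1 : 1 ≤ b := by
    have := abs_nonneg σ; simp only [hb]; linarith
  have hsq : ∀ t : ℤ, (ξ t).1 ^ 2 ≤ b * S + |α| := by
    intro t
    have h := horbit t
    have hx2 : (ξ t).1 ^ 2 = (ξ (t + 1)).1 - δ * (ξ t).2.2 - α + σ * (ξ t).2.1 := by
      simp only [h]; ring
    have h1 : |(ξ (t + 1)).1| ≤ S := hfleS (t + 1)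
    have h2 : |(ξ t).2.1| ≤ S := by rw [hy t]; exact hfleS _
    have h3 : |(ξ t).2.2| ≤ S := by rw [hz t]; exact hfleS _
    have h1' := abs_le.mp h1
    have h2' := abs_le.mp h2
    have h3' := abs_le.mp h3
    have hσy : σ * (ξ t).2.1 ≤ |σ| * S := by
      calc σ * (ξ t).2.1 ≤ |σ * (ξ t).2.1| := le_abs_self _
        _ = |σ| * |(ξ t).2.1| := abs_mul _ _
        _ ≤ |σ| * S := mul_le_mul_of_nonneg_left h2 (abs_nonneg σ)
    have hδz : -(δ * (ξ t).2.2) ≤ δ * S := by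
      have : -(ξ t).2.2 ≤ S := by linarith [h3'.1]
      nlinarith
    have hα : -α ≤ |α| := neg_le_abs α
    rw [hx2]
    simp only [hb]
    nlinarith [h1'.2]
  -- S² ≤ b S + |α|
  have hR0 : 0 ≤ b * S + |α| := by positivity
  have hSsqrt : S ≤ Real.sqrt (b * S + |α|) := by
    refine csSup_le ⟨f 0, ⟨0, rfl⟩⟩ ?_
    rintro x ⟨t, rfl⟩
    rw [show f t = |(ξ t).1| from rfl]
    have : |(ξ t).1| ^ 2 ≤ b * S + |α| := by rw [sq_abs]; exact hsq t
    exact (Real.le_sqrt (abs_nonneg _) hR0).mpr this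
  have hS2 : S ^ 2 ≤ b * S + |α| := by
    have := Real.sq_sqrt hR0
    nlinarith [Real.sqrt_nonneg (b * S + |α|)]
  -- κ satisfies κ² = bκ + |α| and κ ≥ b
  set r := Real.sqrt ((|σ| + δ + 1) ^ 2 + 4 * |α|) with hr
  have hr0 : 0 ≤ r := Real.sqrt_nonneg _
  have hr2 : r ^ 2 = b ^ 2 + 4 * |α| := by
    rw [hr, hb]
    rw [Real.sq_sqrt (by positivity)]
  have hrb : b ≤ r := by nlinarith [abs_nonneg α]
  have hκb : b ≤ κ := by rw [hκ]; linarith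
  have hκ2 : κ ^ 2 = b * κ + |α| := by
    rw [hκ]; nlinarith
  have hSκ : S ≤ κ := by
    by_contra hc
    push_neg at hc
    have h1 : 0 < S - κ := by linarith
    have h2 : 0 < S + κ - b := by linarith
    nlinarith [mul_pos h1 h2]
  intro t
  refine ⟨(hfleS t).trans hSκ, ?_, ?_⟩
  · rw [hy t]; exact (hfleS _).trans hSκ
  · rw [hz t]; exact (hfleS _).trans hSκ
end
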